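/- Let n ≥ 1 and d ≥ 2 be integers, let W ≥ 0, and let A₁, …, Aₙ be symmetric real d×d matrices such that for each i, every row of Aᵢ has ℓ₁-norm at most W (equivalently ‖Aᵢ‖_{1→1} ≤ W). Then E_{σ} ‖ Σ_{i=1}^n σᵢ Aᵢ ‖_{∞→1} ≤ 10 · d · √(log d) · √n · W, where σ is uniform on {−1,1}ⁿ. -/

import Mathlib

/-- `‖M‖_{∞→1} = max { uᵀ M v : ‖u‖_∞ ≤ 1, ‖v‖_∞ ≤ 1 }`. -/
noncomputable def normInfToOne {ι : Type*} [Fintype ι] (M : Matrix ι ι ℝ) : ℝ :=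
  sSup {c : ℝ | ∃ u v : ι → ℝ, (∀ a, |u a| ≤ 1) ∧ (∀ a, |v a| ≤ 1) ∧
    c = ∑ a, ∑ b, u a * M a b * v b}

open Finset Matrix

variable {d : ℕ}

/-- Key computation: for symmetric `M`, `∑ₐ (Mv)ₐ² = vᵀ M² v`. -/
lemma kio_row_sum_sq (M : Matrix (Fin d) (Fin d) ℝ) (hM : M.IsSymm) (v : Fin d → ℝ) :
    ∑ a, (∑ b, M a b * v b) ^ 2 = ∑ a, ∑ b, v a * (M * M) a b * v b := by
  have h1 : ∀ a, (∑ b, M a b * v b) ^ 2 = ∑ b, ∑ c, v b * (M b a * M a c) * v c := by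
    intro a
    rw [pow_two, Finset.sum_mul_sum]
    refine Finset.sum_congr rfl fun b _ => Finset.sum_congr rfl fun c _ => ?_
    rw [hM.apply a b]; ring
  calc ∑ a, (∑ b, M a b * v b) ^ 2
      = ∑ a, ∑ b, ∑ c, v b * (M b a * M a c) * v c := Finset.sum_congr rfl fun a _ => h1 a
    _ = ∑ b, ∑ c, ∑ a, v b * (M b a * M a c) * v c := by
        rw [Finset.sum_comm]
        exact Finset.sum_congr rfl fun b _ => Finset.sum_comm
    _ = ∑ a, ∑ b, v a * (M * M) a b * v b := by
        refine Finset.sum_congr rfl fun b _ => Finset.sum_congr rfl fun c _ => ?_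
        rw [Matrix.mul_apply, Finset.mul_sum, Finset.sum_mul]

/-- Cauchy–Schwarz for the bilinear form of a symmetric matrix. -/
lemma kio_cs_bilin (M : Matrix (Fin d) (Fin d) ℝ) (hM : M.IsSymm) (u v : Fin d → ℝ) :
    (∑ a, ∑ b, u a * M a b * v b) ^ 2 ≤
      (∑ a, u a ^ 2) * ∑ a, ∑ b, v a * (M * M) a b * v b := by
  have h1 : (∑ a, ∑ b, u a * M a b * v b) = ∑ a, u a * (∑ b, M a b * v b) := by
    refine Finset.sum_congr rfl fun a _ => ?_
    rw [Finset.mul_sum]; refine Finset.sum_congr rfl fun b _ => by ring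
  rw [h1, ← kio_row_sum_sq M hM v]
  exact Finset.sum_mul_sq_le_sq_mul_sq _ _ _

lemma kio_quad_nonneg (M : Matrix (Fin d) (Fin d) ℝ) (hM : M.IsSymm) (v : Fin d → ℝ) :
    0 ≤ ∑ a, ∑ b, v a * (M * M) a b * v b := by
  rw [← kio_row_sum_sq M hM v]
  exact Finset.sum_nonneg fun a _ => sq_nonneg _

lemma kio_mul_self_isSymm (M : Matrix (Fin d) (Fin d) ℝ) (hM : M.IsSymm) : (M * M).IsSymm := by
  unfold Matrix.IsSymm
  rw [Matrix.transpose_mul, hM.eq]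

/-- Iterated Cauchy–Schwarz for the quadratic form. -/
lemma kio_quad_pow (B : Matrix (Fin d) (Fin d) ℝ) (hB : B.IsSymm) (v : Fin d → ℝ)
    (h0 : 0 ≤ ∑ a, ∑ b, v a * B a b * v b) (k : ℕ) :
    (∑ a, ∑ b, v a * B a b * v b) ^ (2 ^ k) ≤
      (∑ a, v a ^ 2) ^ (2 ^ k - 1) * ∑ a, ∑ b, v a * (B ^ (2 ^ k)) a b * v b := by
  induction k with
  | zero => simp
  | succ k ih =>
    have hS : (0:ℝ) ≤ ∑ a, v a ^ 2 := Finset.sum_nonneg fun a _ => sq_nonneg _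
    have h1 : (1:ℕ) ≤ 2 ^ k := Nat.one_le_two_pow
    have e1 : (2:ℕ) ^ (k+1) = 2 ^ k * 2 := by ring
    rw [e1, pow_mul]
    have hnn : 0 ≤ (∑ a, ∑ b, v a * B a b * v b) ^ (2 ^ k) := pow_nonneg h0 _
    have hsq := mul_self_le_mul_self hnn ih
    rw [← pow_two, ← pow_two] at hsq
    refine hsq.trans ?_
    rw [mul_pow, ← pow_mul]
    have hcs := kio_cs_bilin (B ^ (2^k)) (hB.pow _) v v
    have h2 : (B ^ (2^k)) * (B ^ (2^k)) = B ^ (2^k * 2) := by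
      rw [← pow_add]; ring_nf
    rw [h2] at hcs
    calc (∑ a, v a ^ 2) ^ ((2^k - 1) * 2) * (∑ a, ∑ b, v a * (B ^ 2^k) a b * v b) ^ 2
        ≤ (∑ a, v a ^ 2) ^ ((2^k - 1) * 2) *
          ((∑ a, v a ^ 2) * ∑ a, ∑ b, v a * (B ^ (2^k * 2)) a b * v b) :=
          mul_le_mul_of_nonneg_left hcs (pow_nonneg hS _)
      _ = (∑ a, v a ^ 2) ^ (2 ^ k * 2 - 1) * ∑ a, ∑ b, v a * (B ^ (2^k * 2)) a b * v b := by
          rw [← mul_assoc, ← pow_succ]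
          congr 2
          omega

lemma kio_trace_sq (C : Matrix (Fin d) (Fin d) ℝ) (hC : C.IsSymm) :
    trace (C * C) = ∑ a, ∑ b, C a b ^ 2 := by
  rw [Matrix.trace]
  refine Finset.sum_congr rfl fun a _ => ?_
  rw [Matrix.diag_apply, Matrix.mul_apply]
  refine Finset.sum_congr rfl fun b _ => ?_
  rw [hC.apply a b, pow_two]

/-- `vᵀ C² v ≤ (∑ v²) · tr(C²)` for symmetric `C`. -/
lemma kio_quad_le_trace (C : Matrix (Fin d) (Fin d) ℝ) (hC : C.IsSymm) (v : Fin d → ℝ) :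
    ∑ a, ∑ b, v a * (C * C) a b * v b ≤ (∑ a, v a ^ 2) * trace (C * C) := by
  rw [← kio_row_sum_sq C hC v, kio_trace_sq C hC, Finset.mul_sum]
  refine Finset.sum_le_sum fun a _ => ?_
  calc (∑ b, C a b * v b) ^ 2 ≤ (∑ b, C a b ^ 2) * ∑ b, v b ^ 2 :=
        Finset.sum_mul_sq_le_sq_mul_sq _ _ _
    _ = (∑ b, v b ^ 2) * ∑ b, C a b ^ 2 := mul_comm _ _

variable {d : ℕ}



lemma kio_pow_two_pow (M : Matrix (Fin d) (Fin d) ℝ) (p : ℕ) :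
    M ^ (2 * p) = (M ^ p) * (M ^ p) := by
  rw [← pow_add]; ring_nf

lemma kio_trace_even_pow_nonneg (M : Matrix (Fin d) (Fin d) ℝ) (hM : M.IsSymm) (p : ℕ) :
    0 ≤ trace (M ^ (2 * p)) := by
  rw [kio_pow_two_pow, kio_trace_sq _ (hM.pow p)]
  exact Finset.sum_nonneg fun a _ => Finset.sum_nonneg fun b _ => sq_nonneg _

lemma kio_sq_sum_le (u : Fin d → ℝ) (hu : ∀ a, |u a| ≤ 1) : ∑ a, u a ^ 2 ≤ (d : ℝ) := by
  calc ∑ a, u a ^ 2 ≤ ∑ _a : Fin d, (1:ℝ) := by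
        refine Finset.sum_le_sum fun a _ => ?_
        have := abs_le_one_iff_mul_self_le_one.mp (hu a)
        rwa [← pow_two] at this
    _ = (d : ℝ) := by simp

/-- For symmetric `M` and bounded `u, v`: `(uᵀMv)^(2·2^k) ≤ d^(2·2^k) · tr(M^(2·2^k))`. -/
lemma kio_bilin_pow_le (M : Matrix (Fin d) (Fin d) ℝ) (hM : M.IsSymm) (k : ℕ)
    (u v : Fin d → ℝ) (hu : ∀ a, |u a| ≤ 1) (hv : ∀ a, |v a| ≤ 1) :
    (∑ a, ∑ b, u a * M a b * v b) ^ (2 * 2 ^ k) ≤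
      (d : ℝ) ^ (2 * 2 ^ k) * trace (M ^ (2 * 2 ^ k)) := by
  set p : ℕ := 2 ^ k with hp
  have hp1 : (1:ℕ) ≤ p := Nat.one_le_two_pow
  set Su : ℝ := ∑ a, u a ^ 2 with hSu
  set Sv : ℝ := ∑ a, v a ^ 2 with hSv
  have hSu0 : 0 ≤ Su := Finset.sum_nonneg fun a _ => sq_nonneg _
  have hSv0 : 0 ≤ Sv := Finset.sum_nonneg fun a _ => sq_nonneg _
  have hSud : Su ≤ (d:ℝ) := kio_sq_sum_le u hu
  have hSvd : Sv ≤ (d:ℝ) := kio_sq_sum_le v hv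
  have hd0 : (0:ℝ) ≤ d := Nat.cast_nonneg d
  set Q2 : ℝ := ∑ a, ∑ b, v a * (M * M) a b * v b with hQ2
  have h2 : (∑ a, ∑ b, u a * M a b * v b) ^ 2 ≤ Su * Q2 := kio_cs_bilin M hM u v
  have hQ20 : 0 ≤ Q2 := kio_quad_nonneg M hM v
  have hMM : (M * M).IsSymm := kio_mul_self_isSymm M hM
  have h4 : Q2 ^ p ≤ Sv ^ (p - 1) * ∑ a, ∑ b, v a * ((M * M) ^ p) a b * v b :=
    kio_quad_pow (M * M) hMM v hQ20 k
  have hMMp : (M * M) ^ p = (M ^ p) * (M ^ p) := by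
    rw [← pow_two, ← pow_mul, kio_pow_two_pow]
  have h5 : ∑ a, ∑ b, v a * ((M * M) ^ p) a b * v b ≤ Sv * trace (M ^ (2 * p)) := by
    rw [hMMp, kio_pow_two_pow]
    exact kio_quad_le_trace (M ^ p) (hM.pow p) v
  have hT0 : 0 ≤ trace (M ^ (2 * p)) := kio_trace_even_pow_nonneg M hM p
  have hq5 : 0 ≤ ∑ a, ∑ b, v a * ((M * M) ^ p) a b * v b := by
    rw [hMMp]; exact kio_quad_nonneg (M ^ p) (hM.pow p) v
  calc (∑ a, ∑ b, u a * M a b * v b) ^ (2 * p)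
      = ((∑ a, ∑ b, u a * M a b * v b) ^ 2) ^ p := by rw [← pow_mul]
    _ ≤ (Su * Q2) ^ p := pow_le_pow_left₀ (sq_nonneg _) h2 p
    _ = Su ^ p * Q2 ^ p := mul_pow _ _ _
    _ ≤ Su ^ p * (Sv ^ (p-1) * (Sv * trace (M ^ (2*p)))) := by
        refine mul_le_mul_of_nonneg_left ?_ (pow_nonneg hSu0 _)
        refine h4.trans (mul_le_mul_of_nonneg_left h5 (pow_nonneg hSv0 _))
    _ = Su ^ p * Sv ^ p * trace (M ^ (2*p)) := by
        have e : Sv ^ (p-1) * (Sv * trace (M ^ (2*p))) = Sv ^ p * trace (M ^ (2*p)) := by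
          rw [← mul_assoc, ← pow_succ]
          congr 2
          omega
        rw [e, ← mul_assoc]
    _ ≤ (d:ℝ) ^ p * (d:ℝ) ^ p * trace (M ^ (2*p)) := by
        refine mul_le_mul_of_nonneg_right ?_ hT0
        exact mul_le_mul (pow_le_pow_left₀ hSu0 hSud p) (pow_le_pow_left₀ hSv0 hSvd p)
          (pow_nonneg hSv0 _) (pow_nonneg hd0 _)
    _ = (d:ℝ) ^ (2 * p) * trace (M ^ (2*p)) := by rw [← pow_add]; ring_nf

lemma kio_normInfToOne_nonneg {ι : Type*} [Fintype ι] (M : Matrix ι ι ℝ)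
    (hbdd : BddAbove {c : ℝ | ∃ u v : ι → ℝ, (∀ a, |u a| ≤ 1) ∧ (∀ a, |v a| ≤ 1) ∧
      c = ∑ a, ∑ b, u a * M a b * v b}) : 0 ≤ normInfToOne M := by
  refine le_csSup hbdd ?_
  exact ⟨0, 0, fun a => by simp, fun a => by simp, by simp⟩

/-- Main per-σ bound: `X^(2·2^k) ≤ d^(2·2^k) · tr(M^(2·2^k))`, plus nonnegativity. -/
lemma kio_normInfToOne_pow_le (M : Matrix (Fin d) (Fin d) ℝ) (hM : M.IsSymm) (k : ℕ) :
    0 ≤ normInfToOne M ∧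
    normInfToOne M ^ (2 * 2 ^ k) ≤ (d : ℝ) ^ (2 * 2 ^ k) * trace (M ^ (2 * 2 ^ k)) := by
  set m : ℕ := 2 * 2 ^ k with hm
  have hm0 : m ≠ 0 := by positivity
  have hT0 : 0 ≤ trace (M ^ m) := kio_trace_even_pow_nonneg M hM (2 ^ k)
  set r : ℝ := ((d:ℝ) ^ m * trace (M ^ m)) ^ ((m : ℝ)⁻¹) with hr
  have hc0 : (0:ℝ) ≤ (d:ℝ) ^ m * trace (M ^ m) := by positivity
  have hr0 : 0 ≤ r := Real.rpow_nonneg hc0 _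
  have hrm : r ^ m = (d:ℝ) ^ m * trace (M ^ m) := by
    rw [hr, ← Real.rpow_natCast (((d:ℝ) ^ m * trace (M ^ m)) ^ ((m : ℝ)⁻¹)) m,
      ← Real.rpow_mul hc0, inv_mul_cancel₀ (by exact_mod_cast hm0), Real.rpow_one]
  have hkey : ∀ x ∈ {c : ℝ | ∃ u v : Fin d → ℝ, (∀ a, |u a| ≤ 1) ∧ (∀ a, |v a| ≤ 1) ∧
      c = ∑ a, ∑ b, u a * M a b * v b}, x ≤ r := by
    rintro x ⟨u, v, hu, hv, rfl⟩
    have h := kio_bilin_pow_le M hM k u v hu hv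
    rw [← hm] at h
    rw [← hrm] at h
    have hev : Even m := ⟨2 ^ k, by omega⟩
    have habs : |∑ a, ∑ b, u a * M a b * v b| ^ m ≤ r ^ m := by
      rwa [Even.pow_abs hev]
    calc (∑ a, ∑ b, u a * M a b * v b) ≤ |∑ a, ∑ b, u a * M a b * v b| := le_abs_self _
      _ ≤ r := le_of_pow_le_pow_left₀ hm0 hr0 habs
  have hbdd : BddAbove {c : ℝ | ∃ u v : Fin d → ℝ, (∀ a, |u a| ≤ 1) ∧ (∀ a, |v a| ≤ 1) ∧
      c = ∑ a, ∑ b, u a * M a b * v b} := ⟨r, hkey⟩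
  have hX0 : 0 ≤ normInfToOne M := kio_normInfToOne_nonneg M hbdd
  have hXr : normInfToOne M ≤ r := Real.sSup_le hkey hr0
  exact ⟨hX0, by rw [← hrm]; exact pow_le_pow_left₀ hX0 hXr m⟩

/-- Noncommutative expansion of a power of a sum. -/
lemma kio_sum_pow {R : Type*} [Semiring R] {ι : Type*} [Fintype ι] (B : ι → R) :
    ∀ m : ℕ, (∑ i, B i) ^ m = ∑ f : Fin m → ι, (List.ofFn fun j => B (f j)).prod := by
  intro m
  induction m with
  | zero => simp
  | succ m ih =>
    rw [pow_succ', ih, Finset.mul_sum]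
    simp_rw [Finset.sum_mul]
    rw [Finset.sum_comm]
    rw [← Equiv.sum_comp (Fin.consEquiv (fun _ : Fin (m+1) => ι))
      (fun f : Fin (m+1) → ι => (List.ofFn fun j => B (f j)).prod), Fintype.sum_prod_type]
    refine Finset.sum_congr rfl fun i _ => Finset.sum_congr rfl fun f _ => ?_
    rw [List.ofFn_succ]
    simp [Fin.consEquiv, List.prod_cons]

/-- Pull scalars out of an `ofFn` list product of matrices. -/
lemma kio_smul_prod {R : Type*} [CommSemiring R] {A : Type*} [Semiring A] [Algebra R A] :
    ∀ (m : ℕ) (c : Fin m → R) (C : Fin m → A),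
      (List.ofFn fun j => c j • C j).prod = (∏ j, c j) • (List.ofFn fun j => C j).prod := by
  intro m
  induction m with
  | zero => intro c C; simp
  | succ m ih =>
    intro c C
    rw [List.ofFn_succ, List.prod_cons, ih (fun j => c j.succ) (fun j => C j.succ),
      List.ofFn_succ, List.prod_cons, Fin.prod_univ_succ, smul_mul_smul_comm]

variable {d n : ℕ}

/-- The ±1 sign attached to a boolean. -/
noncomputable def kioSgn (b : Bool) : ℝ := if b then 1 else -1

/-- Scalar expansion of a power of a sum. -/
lemma kio_sum_pow_comm (c : Fin n → ℝ) (m : ℕ) :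
    (∑ i, c i) ^ m = ∑ f : Fin m → Fin n, ∏ j, c (f j) := by
  rw [kio_sum_pow c m]
  exact Finset.sum_congr rfl fun f _ => List.prod_ofFn

/-- The average of a product of signs is nonnegative. -/
lemma kio_sign_avg_nonneg (m : ℕ) (f : Fin m → Fin n) :
    0 ≤ ∑ σ : Fin n → Bool, ∏ j, kioSgn (σ (f j)) := by
  have h1 : ∀ σ : Fin n → Bool, ∏ j, kioSgn (σ (f j))
      = ∏ i : Fin n, kioSgn (σ i) ^ (Finset.univ.filter fun j => f j = i).card := by
    intro σ
    rw [← Finset.prod_fiberwise_of_maps_to (t := Finset.univ)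
      (fun j _ => Finset.mem_univ (f j)) (fun j => kioSgn (σ (f j)))]
    refine Finset.prod_congr rfl fun i _ => ?_
    rw [← Finset.prod_const]
    refine Finset.prod_congr rfl fun j hj => ?_
    rw [(Finset.mem_filter.mp hj).2]
  simp_rw [h1]
  have h2 : ∑ σ : Fin n → Bool, ∏ i : Fin n,
        kioSgn (σ i) ^ (Finset.univ.filter fun j => f j = i).card
      = ∏ i : Fin n, ∑ b : Bool, kioSgn b ^ (Finset.univ.filter fun j => f j = i).card := by
    rw [Finset.prod_univ_sum]
    rw [← Fintype.piFinset_univ]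
  rw [h2]
  refine Finset.prod_nonneg fun i _ => ?_
  rw [Fintype.sum_bool]
  rcases Nat.even_or_odd ((Finset.univ.filter fun j => f j = i).card) with he | ho
  · simp [kioSgn, he.neg_one_pow]
  · simp [kioSgn, ho.neg_one_pow]

/-- `ℓ∞ → ℓ∞` bound for products of matrices with rowwise `ℓ¹` bound `W`. -/
lemma kio_prod_mulVec_bound (W : ℝ) (A : Fin n → Matrix (Fin d) (Fin d) ℝ)
    (hrow : ∀ i a, ∑ b, |A i a b| ≤ W) :
    ∀ (L : List (Fin n)) (v : Fin d → ℝ) (c : ℝ), 0 ≤ c → (∀ x, |v x| ≤ c) →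
      ∀ a, |((L.map A).prod.mulVec v) a| ≤ W ^ L.length * c := by
  intro L
  induction L with
  | nil => intro v c hc hv a; simpa [Matrix.one_mulVec] using hv a
  | cons i L ih =>
    intro v c hc hv a
    have hW0 : 0 ≤ W := le_trans (Finset.sum_nonneg fun b _ => abs_nonneg _) (hrow i a)
    rw [List.map_cons, List.prod_cons, ← Matrix.mulVec_mulVec]
    set w := (List.map A L).prod.mulVec v with hw
    have hwb : ∀ x, |w x| ≤ W ^ L.length * c := ih v c hc hv
    calc |(A i *ᵥ w) a| = |∑ b, A i a b * w b| := rfl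
      _ ≤ ∑ b, |A i a b * w b| := Finset.abs_sum_le_sum_abs _ _
      _ ≤ ∑ b, |A i a b| * (W ^ L.length * c) := by
          refine Finset.sum_le_sum fun b _ => ?_
          rw [abs_mul]
          exact mul_le_mul_of_nonneg_left (hwb b) (abs_nonneg _)
      _ = (∑ b, |A i a b|) * (W ^ L.length * c) := by rw [Finset.sum_mul]
      _ ≤ W * (W ^ L.length * c) := by
          refine mul_le_mul_of_nonneg_right (hrow i a) ?_
          positivity
      _ = W ^ (i :: L : List (Fin n)).length * c := by
          rw [List.length_cons, pow_succ]; ring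

/-- Trace bound for a word in the `A i`. -/
lemma kio_trace_prod_bound (W : ℝ) (A : Fin n → Matrix (Fin d) (Fin d) ℝ)
    (hrow : ∀ i a, ∑ b, |A i a b| ≤ W) (m : ℕ) (f : Fin m → Fin n) :
    |Matrix.trace ((List.ofFn fun j => A (f j)).prod)| ≤ (d : ℝ) * W ^ m := by
  have hofn : (List.ofFn fun j => A (f j)) = (List.ofFn f).map A := by
    rw [List.map_ofFn]; rfl
  have hentry : ∀ a b, |((List.ofFn f).map A).prod a b| ≤ W ^ m := by
    intro a b
    have h1 : ∀ x : Fin d, |(Pi.single b 1 : Fin d → ℝ) x| ≤ 1 := by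
      intro x
      rcases eq_or_ne x b with rfl | hx
      · simp
      · simp [Pi.single_apply, hx]
    have := kio_prod_mulVec_bound W A hrow (List.ofFn f)
      (Pi.single b 1 : Fin d → ℝ) 1 zero_le_one h1 a
    rw [List.length_ofFn, mul_one] at this
    simpa only [Matrix.mulVec_single_one, Matrix.col_apply] using this
  rw [hofn]
  have htr : Matrix.trace ((List.ofFn f).map A).prod = ∑ a, ((List.ofFn f).map A).prod a a := rfl
  rw [htr]
  calc |∑ a, ((List.ofFn f).map A).prod a a| ≤ ∑ a, |((List.ofFn f).map A).prod a a| :=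
        Finset.abs_sum_le_sum_abs _ _
    _ ≤ ∑ _a : Fin d, W ^ m := Finset.sum_le_sum fun a _ => hentry a a
    _ = (d : ℝ) * W ^ m := by rw [Finset.sum_const]; simp [mul_comm]



variable {d n : ℕ}

/-- Expected trace of the `m`-th power, bounded by scalar Rademacher moments. -/
lemma kio_sum_trace_le (W : ℝ) (A : Fin n → Matrix (Fin d) (Fin d) ℝ)
    (hrow : ∀ i a, ∑ b, |A i a b| ≤ W) (m : ℕ) :
    ∑ σ : Fin n → Bool, Matrix.trace ((∑ i, kioSgn (σ i) • A i) ^ m)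
      ≤ (d:ℝ) * W ^ m * ∑ σ : Fin n → Bool, (∑ i, kioSgn (σ i)) ^ m := by
  have hexp : ∀ σ : Fin n → Bool,
      Matrix.trace ((∑ i, kioSgn (σ i) • A i) ^ m)
        = ∑ f : Fin m → Fin n, (∏ j, kioSgn (σ (f j))) *
            Matrix.trace ((List.ofFn fun j => A (f j)).prod) := by
    intro σ
    rw [kio_sum_pow (fun i => kioSgn (σ i) • A i) m, Matrix.trace_sum]
    refine Finset.sum_congr rfl fun f _ => ?_
    rw [kio_smul_prod m (fun j => kioSgn (σ (f j))) (fun j => A (f j)),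
      Matrix.trace_smul, smul_eq_mul]
  simp_rw [hexp]
  rw [Finset.sum_comm]
  have hstep : ∀ f : Fin m → Fin n,
      ∑ σ : Fin n → Bool, (∏ j, kioSgn (σ (f j))) *
          Matrix.trace ((List.ofFn fun j => A (f j)).prod)
        ≤ (∑ σ : Fin n → Bool, ∏ j, kioSgn (σ (f j))) * ((d:ℝ) * W ^ m) := by
    intro f
    rw [← Finset.sum_mul]
    refine mul_le_mul_of_nonneg_left ?_ (kio_sign_avg_nonneg m f)
    exact le_trans (le_abs_self _) (kio_trace_prod_bound W A hrow m f)
  calc ∑ f : Fin m → Fin n, ∑ σ : Fin n → Bool, (∏ j, kioSgn (σ (f j))) *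
          Matrix.trace ((List.ofFn fun j => A (f j)).prod)
      ≤ ∑ f : Fin m → Fin n, (∑ σ : Fin n → Bool, ∏ j, kioSgn (σ (f j))) * ((d:ℝ) * W ^ m) :=
        Finset.sum_le_sum fun f _ => hstep f
    _ = (d:ℝ) * W ^ m * ∑ σ : Fin n → Bool, ∑ f : Fin m → Fin n, ∏ j, kioSgn (σ (f j)) := by
        rw [← Finset.sum_mul, Finset.sum_comm, mul_comm]
    _ = (d:ℝ) * W ^ m * ∑ σ : Fin n → Bool, (∑ i, kioSgn (σ i)) ^ m := by
        congr 1
        exact Finset.sum_congr rfl fun σ _ => (kio_sum_pow_comm (fun i => kioSgn (σ i)) m).symm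

/-- MGF bound on scalar Rademacher moments. -/
lemma kio_moment_bound (hn : 1 ≤ n) (p : ℕ) (hp : 1 ≤ p) :
    ∑ σ : Fin n → Bool, (∑ i, kioSgn (σ i)) ^ (2*p)
      ≤ (2:ℝ)^n * (2 * ((2*p).factorial : ℝ) * Real.exp p * ((n:ℝ)/(2*p)) ^ p) := by
  have hn0 : (0:ℝ) < n := by exact_mod_cast hn
  have hp0 : (0:ℝ) < (2*p:ℝ) := by positivity
  set t : ℝ := Real.sqrt ((2*p : ℝ) / n) with ht
  have ht2 : t ^ 2 = (2*p : ℝ) / n := Real.sq_sqrt (by positivity)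
  have ht0 : 0 < t := Real.sqrt_pos.mpr (by positivity)
  -- pointwise bound
  have hpoint : ∀ S : ℝ, S ^ (2*p) ≤
      (((2*p).factorial : ℝ) / t^(2*p)) * (Real.exp (t*S) + Real.exp (-(t*S))) := by
    intro S
    have hxx : ∀ x : ℝ, x ^ (2*p) ≤ (((2*p).factorial : ℝ) : ℝ) * (Real.exp x + Real.exp (-x)) := by
      intro x
      have h1 : |x| ^ (2*p) / (((2*p).factorial : ℝ) : ℝ) ≤ Real.exp |x| := by
        have h2 := Real.sum_le_exp_of_nonneg (abs_nonneg x) (2*p+1)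
        refine le_trans ?_ h2
        exact Finset.single_le_sum (f := fun i => |x| ^ i / Nat.factorial i)
          (fun i _ => by positivity) (Finset.self_mem_range_succ (2*p))
      have h3 : Real.exp |x| ≤ Real.exp x + Real.exp (-x) := by
        rcases abs_cases x with ⟨h, _⟩ | ⟨h, _⟩
        · rw [h]; nlinarith [Real.exp_pos (-x)]
        · rw [h]; nlinarith [Real.exp_pos x]
      have h4 : x ^ (2*p) = |x| ^ (2*p) := (Even.pow_abs ⟨p, by ring⟩ x).symm
      rw [h4]
      rw [div_le_iff₀ (by positivity)] at h1
      calc |x| ^ (2*p) ≤ Real.exp |x| * ((2*p).factorial : ℝ) := h1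
        _ ≤ (((2*p).factorial : ℝ) : ℝ) * (Real.exp x + Real.exp (-x)) := by
            rw [mul_comm]
            exact mul_le_mul_of_nonneg_left h3 (by positivity)
    have h5 := hxx (t * S)
    have h6 : (t*S) ^ (2*p) = t^(2*p) * S^(2*p) := mul_pow t S (2*p)
    rw [h6] at h5
    rw [div_mul_eq_mul_div, le_div_iff₀ (by positivity), mul_comm (S ^ (2*p))]
    exact h5
  -- MGF computation
  have hmgf : ∀ s : ℝ, ∑ σ : Fin n → Bool, Real.exp (s * ∑ i, kioSgn (σ i))
      = (Real.exp s + Real.exp (-s)) ^ n := by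
    intro s
    have h1 : ∀ σ : Fin n → Bool, Real.exp (s * ∑ i, kioSgn (σ i))
        = ∏ i, Real.exp (s * kioSgn (σ i)) := by
      intro σ
      rw [Finset.mul_sum, Real.exp_sum]
    simp_rw [h1]
    have hpi := Finset.prod_univ_sum (fun _ : Fin n => (Finset.univ : Finset Bool))
      (fun i b => Real.exp (s * kioSgn b))
    rw [Fintype.piFinset_univ] at hpi
    rw [← hpi]
    have h2 : ∀ i : Fin n, ∑ b : Bool, Real.exp (s * kioSgn b)
        = Real.exp s + Real.exp (-s) := by
      intro i
      rw [Fintype.sum_bool]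
      simp [kioSgn]
    rw [Finset.prod_congr rfl fun i _ => h2 i, Finset.prod_const, Finset.card_univ,
      Fintype.card_fin]
  have hsum : ∑ σ : Fin n → Bool, (∑ i, kioSgn (σ i)) ^ (2*p)
      ≤ (((2*p).factorial : ℝ) / t^(2*p)) * (2 * (Real.exp t + Real.exp (-t)) ^ n) := by
    calc ∑ σ : Fin n → Bool, (∑ i, kioSgn (σ i)) ^ (2*p)
        ≤ ∑ σ : Fin n → Bool, (((2*p).factorial : ℝ) / t^(2*p)) *
            (Real.exp (t * ∑ i, kioSgn (σ i)) + Real.exp (-(t * ∑ i, kioSgn (σ i)))) :=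
          Finset.sum_le_sum fun σ _ => hpoint _
      _ = (((2*p).factorial : ℝ) / t^(2*p)) * (∑ σ : Fin n → Bool, Real.exp (t * ∑ i, kioSgn (σ i))
            + ∑ σ : Fin n → Bool, Real.exp (-t * ∑ i, kioSgn (σ i))) := by
          rw [← Finset.mul_sum, Finset.sum_add_distrib]
          simp_rw [neg_mul]
      _ = (((2*p).factorial : ℝ) / t^(2*p)) * ((Real.exp t + Real.exp (-t)) ^ n
            + (Real.exp (-t) + Real.exp (-(-t))) ^ n) := by rw [hmgf t, hmgf (-t)]
      _ = (((2*p).factorial : ℝ) / t^(2*p)) * (2 * (Real.exp t + Real.exp (-t)) ^ n) := by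
          rw [neg_neg]; ring
  refine hsum.trans ?_
  have hch : Real.exp t + Real.exp (-t) = 2 * Real.cosh t := by
    rw [Real.cosh_eq]; ring
  have hch2 : (Real.exp t + Real.exp (-t)) ^ n ≤ 2^n * Real.exp (n * (t^2/2)) := by
    rw [hch, mul_pow]
    refine mul_le_mul_of_nonneg_left ?_ (by positivity)
    calc Real.cosh t ^ n ≤ (Real.exp (t^2/2)) ^ n :=
          pow_le_pow_left₀ (Real.cosh_pos t).le (Real.cosh_le_exp_half_sq t) n
      _ = Real.exp (n * (t^2/2)) := by rw [← Real.exp_nat_mul]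
  have hnt : (n:ℝ) * (t^2/2) = p := by
    rw [ht2]
    field_simp
  have htp : t ^ (2*p) = ((2*p:ℝ)/n) ^ p := by
    rw [pow_mul, ht2]
  have hdiv : ((2*p).factorial : ℝ) / t^(2*p) = ((2*p).factorial : ℝ) * ((n:ℝ)/(2*p)) ^ p := by
    rw [htp, div_eq_mul_inv, ← inv_pow, inv_div]
  have hc0 : (0:ℝ) ≤ ((2*p).factorial : ℝ) * ((n:ℝ)/(2*p)) ^ p := by positivity
  calc (((2*p).factorial : ℝ) / t^(2*p)) * (2 * (Real.exp t + Real.exp (-t)) ^ n)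
      ≤ (((2*p).factorial : ℝ) * ((n:ℝ)/(2*p)) ^ p) * (2 * (2^n * Real.exp (n * (t^2/2)))) := by
        rw [hdiv]
        exact mul_le_mul_of_nonneg_left (by nlinarith [hch2]) hc0
    _ = (2:ℝ)^n * (2 * ((2*p).factorial : ℝ) * Real.exp p * ((n:ℝ)/(2*p)) ^ p) := by
        rw [hnt]; ring

/-- Numeric estimate for the chosen `p ≈ log d`. -/
lemma kio_numeric (n d p : ℕ) (hd : 2 ≤ d) (hp1 : 1 ≤ p)
    (hLp : Real.log d ≤ p) (hp2L : (p:ℝ) ≤ 2 * Real.log d) :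
    (d:ℝ) * (2 * ((2*p).factorial : ℝ) * Real.exp p * ((n:ℝ)/(2*p)) ^ p)
      ≤ 100^p * (Real.log d)^p * (n:ℝ)^p := by
  have hd0 : (0:ℝ) < d := by positivity
  have hL0 : 0 < Real.log d := Real.log_pos (by exact_mod_cast hd)
  have hp0 : (0:ℝ) < (2*p:ℝ) := by positivity
  have hdE : (d:ℝ) ≤ Real.exp p := (Real.log_le_iff_le_exp hd0).mp hLp
  have hE0 : (0:ℝ) < Real.exp p := Real.exp_pos _
  have hfact : ((2*p).factorial : ℝ) ≤ ((2*p:ℝ))^(2*p) := by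
    have h := Nat.factorial_le_pow (2*p)
    calc ((2*p).factorial : ℝ) ≤ (((2*p)^(2*p) : ℕ) : ℝ) := by exact_mod_cast h
      _ = ((2*p:ℝ))^(2*p) := by push_cast; ring
  have hdiv : ((n:ℝ)/(2*p)) ^ p = (n:ℝ)^p / ((2*p:ℝ))^p := div_pow _ _ _
  have hn0 : (0:ℝ) ≤ (n:ℝ) := Nat.cast_nonneg n
  -- reduce to powers
  have key : (d:ℝ) * (2 * ((2*p).factorial : ℝ) * Real.exp p * ((n:ℝ)/(2*p)) ^ p)
      ≤ 2 * ((Real.exp 1 * Real.exp 1 * (2*p:ℝ)) ^ p * (n:ℝ)^p) := by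
    have h1 : ((2*p).factorial : ℝ) * (1/((2*p:ℝ))^p) ≤ ((2*p:ℝ))^p := by
      rw [mul_one_div, div_le_iff₀ (by positivity), ← pow_add]
      calc ((2*p).factorial : ℝ) ≤ ((2*p:ℝ))^(2*p) := hfact
        _ = ((2*p:ℝ))^(p+p) := by congr 1; ring
    have hexp2 : Real.exp p = Real.exp 1 ^ p := (Real.exp_one_pow p).symm
    calc (d:ℝ) * (2 * ((2*p).factorial : ℝ) * Real.exp p * ((n:ℝ)/(2*p)) ^ p)
        = 2 * (Real.exp p * (d:ℝ)) * (((2*p).factorial : ℝ) * (1/((2*p:ℝ))^p)) * (n:ℝ)^p := by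
          rw [hdiv]; field_simp
      _ ≤ 2 * (Real.exp p * Real.exp p) * ((2*p:ℝ))^p * (n:ℝ)^p := by
          have e1 : Real.exp p * (d:ℝ) ≤ Real.exp p * Real.exp p :=
            mul_le_mul_of_nonneg_left hdE hE0.le
          have f0 : (0:ℝ) ≤ ((2*p).factorial : ℝ) * (1/((2*p:ℝ))^p) := by positivity
          have e2 : 2 * (Real.exp p * (d:ℝ)) * (((2*p).factorial : ℝ) * (1/((2*p:ℝ))^p))
              ≤ 2 * (Real.exp p * Real.exp p) * ((2*p:ℝ))^p := by
            refine mul_le_mul (by nlinarith [hE0, hd0.le, hdE]) h1 f0 (by positivity)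
          exact mul_le_mul_of_nonneg_right e2 (by positivity)
      _ = 2 * ((Real.exp 1 * Real.exp 1 * (2*p:ℝ)) ^ p * (n:ℝ)^p) := by
          rw [hexp2, mul_pow, mul_pow]; ring
  refine key.trans ?_
  -- now: 2 * ((E·E·2p)^p · n^p) ≤ 100^p L^p n^p
  have hE : Real.exp 1 ≤ 2.7182818286 := Real.exp_one_lt_d9.le
  have hE1 : (0:ℝ) < Real.exp 1 := Real.exp_pos 1
  have hbase : Real.exp 1 * Real.exp 1 * (2*p:ℝ) ≤ 50 * Real.log d := by
    have h2p : (2*p:ℝ) ≤ 4 * Real.log d := by nlinarith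
    have hEE : Real.exp 1 * Real.exp 1 ≤ 12.5 := by nlinarith
    nlinarith [hL0]
  have hpow : (Real.exp 1 * Real.exp 1 * (2*p:ℝ)) ^ p ≤ (50 * Real.log d) ^ p :=
    pow_le_pow_left₀ (by positivity) hbase p
  have h2 : (2:ℝ) ≤ 2 ^ p := by
    calc (2:ℝ) = 2^1 := (pow_one 2).symm
      _ ≤ 2^p := pow_le_pow_right₀ (by norm_num) hp1
  calc 2 * ((Real.exp 1 * Real.exp 1 * (2*p:ℝ)) ^ p * (n:ℝ)^p)
      ≤ 2^p * ((50 * Real.log d) ^ p * (n:ℝ)^p) := by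
        refine mul_le_mul h2 ?_ (by positivity) (by positivity)
        exact mul_le_mul_of_nonneg_right hpow (by positivity)
    _ = 100^p * (Real.log d)^p * (n:ℝ)^p := by
        rw [mul_pow, show (100:ℝ) = 2 * 50 by norm_num, mul_pow]
        ring





/-- Combined estimate: for symmetric `d × d` matrices `A_i` whose rows all have `ℓ₁`-norm
at most `W`, `𝔼_σ ‖∑ σ_i A_i‖_{∞→1} ≤ 10 d √(log d) √n W`. -/
theorem khintchine_infty_one
    (n d : ℕ) (hn : 1 ≤ n) (hd : 2 ≤ d) (W : ℝ) (hW : 0 ≤ W)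
    (A : Fin n → Matrix (Fin d) (Fin d) ℝ)
    (hsymm : ∀ i, (A i).IsSymm)
    (hrow : ∀ i a, ∑ b, |A i a b| ≤ W) :
    (1 / 2 ^ n : ℝ) *
        ∑ σ : Fin n → Bool,
          normInfToOne (∑ i, (if σ i then (1 : ℝ) else -1) • A i) ≤
      10 * (d : ℝ) * Real.sqrt (Real.log d) * Real.sqrt n * W := by
  classical
  have hd1 : (1:ℝ) < (d:ℝ) := by exact_mod_cast lt_of_lt_of_le one_lt_two hd
  have hL0 : 0 < Real.log d := Real.log_pos hd1
  have hlog2 : Real.log 2 ≤ Real.log d := by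
    apply Real.log_le_log (by norm_num)
    exact_mod_cast hd
  -- choice of p
  set k : ℕ := Nat.clog 2 ⌈Real.log d⌉₊ with hkdef
  set p : ℕ := 2 ^ k with hpdef
  have hp1 : 1 ≤ p := Nat.one_le_two_pow
  have hLp : Real.log d ≤ (p:ℝ) := by
    calc Real.log d ≤ (⌈Real.log d⌉₊ : ℝ) := Nat.le_ceil _
      _ ≤ (p:ℝ) := by exact_mod_cast Nat.le_pow_clog one_lt_two _
  have hp2L : (p:ℝ) ≤ 2 * Real.log d := by
    rcases Nat.eq_zero_or_pos k with hk0 | hkpos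
    · have : p = 1 := by rw [hpdef, hk0, pow_zero]
      rw [this]
      have h2 := Real.log_two_gt_d9
      push_cast
      nlinarith
    · have hceil2 : 2 ≤ ⌈Real.log d⌉₊ := by
        by_contra hcon
        push_neg at hcon
        have : ⌈Real.log d⌉₊ ≤ 1 := by omega
        have := Nat.clog_of_right_le_one this 2
        omega
      have hlt : 2 ^ (k - 1) < ⌈Real.log d⌉₊ :=
        Nat.pow_pred_clog_lt_self one_lt_two hceil2
      have h1 : (2:ℕ) ^ (k - 1) ≤ ⌈Real.log d⌉₊ - 1 := by omega
      have h2 : ((⌈Real.log d⌉₊ : ℝ)) < Real.log d + 1 := Nat.ceil_lt_add_one hL0.le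
      have h3 : ((2 ^ (k-1) : ℕ) : ℝ) ≤ (⌈Real.log d⌉₊ : ℝ) - 1 := by
        have hc : ((⌈Real.log d⌉₊ - 1 : ℕ) : ℝ) = (⌈Real.log d⌉₊ : ℝ) - 1 := by
          push_cast [Nat.cast_sub (by omega : 1 ≤ ⌈Real.log d⌉₊)]
          ring
        rw [← hc]
        exact_mod_cast h1
      have hpk : p = 2 * 2 ^ (k - 1) := by
        rw [hpdef, ← pow_succ']
        congr 1
        omega
      have h4 : ((2 ^ (k-1) : ℕ) : ℝ) ≤ Real.log d := by linarith
      rw [hpk]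
      push_cast at h4 ⊢
      nlinarith
  -- abbreviations
  set M : (Fin n → Bool) → Matrix (Fin d) (Fin d) ℝ :=
    fun σ => ∑ i, kioSgn (σ i) • A i with hMdef
  have hMeq : ∀ σ : Fin n → Bool,
      (∑ i, (if σ i then (1 : ℝ) else -1) • A i) = M σ := fun σ => rfl
  simp_rw [hMeq]
  set X : (Fin n → Bool) → ℝ := fun σ => normInfToOne (M σ) with hXdef
  have hMsymm : ∀ σ, (M σ).IsSymm := by
    intro σ
    unfold Matrix.IsSymm
    rw [Matrix.transpose_sum]
    exact Finset.sum_congr rfl fun i _ => by rw [Matrix.transpose_smul, (hsymm i).eq]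
  have hXpow : ∀ σ, 0 ≤ X σ ∧ X σ ^ (2 * p) ≤ (d:ℝ) ^ (2*p) * trace ((M σ) ^ (2*p)) :=
    fun σ => kio_normInfToOne_pow_le (M σ) (hMsymm σ) k
  -- sum bound
  have hsum1 : ∑ σ : Fin n → Bool, X σ ^ (2*p)
      ≤ (d:ℝ) ^ (2*p) * ∑ σ : Fin n → Bool, trace ((M σ) ^ (2*p)) := by
    rw [Finset.mul_sum]
    exact Finset.sum_le_sum fun σ _ => (hXpow σ).2
  have hsum2 : ∑ σ : Fin n → Bool, trace ((M σ) ^ (2*p))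
      ≤ (d:ℝ) * W ^ (2*p) * ∑ σ : Fin n → Bool, (∑ i, kioSgn (σ i)) ^ (2*p) :=
    kio_sum_trace_le W A hrow (2*p)
  have hsum3 : ∑ σ : Fin n → Bool, (∑ i, kioSgn (σ i)) ^ (2*p)
      ≤ (2:ℝ)^n * (2 * ((2*p).factorial : ℝ) * Real.exp p * ((n:ℝ)/(2*p)) ^ p) :=
    kio_moment_bound hn p hp1
  set K : ℝ := 2 * ((2*p).factorial : ℝ) * Real.exp p * ((n:ℝ)/(2*p)) ^ p with hKdef
  have hK0 : 0 ≤ K := by positivity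
  have hW2p : (0:ℝ) ≤ W ^ (2*p) := by positivity
  have hd0 : (0:ℝ) < (d:ℝ) := by linarith
  have hchain : ∑ σ : Fin n → Bool, X σ ^ (2*p)
      ≤ (2:ℝ)^n * ((d:ℝ) ^ (2*p) * W ^ (2*p) * ((d:ℝ) * K)) := by
    calc ∑ σ : Fin n → Bool, X σ ^ (2*p)
        ≤ (d:ℝ) ^ (2*p) * ∑ σ : Fin n → Bool, trace ((M σ) ^ (2*p)) := hsum1
      _ ≤ (d:ℝ) ^ (2*p) * ((d:ℝ) * W ^ (2*p) *
            ∑ σ : Fin n → Bool, (∑ i, kioSgn (σ i)) ^ (2*p)) := by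
          exact mul_le_mul_of_nonneg_left hsum2 (by positivity)
      _ ≤ (d:ℝ) ^ (2*p) * ((d:ℝ) * W ^ (2*p) * ((2:ℝ)^n * K)) := by
          refine mul_le_mul_of_nonneg_left ?_ (by positivity)
          exact mul_le_mul_of_nonneg_left hsum3 (by positivity)
      _ = (2:ℝ)^n * ((d:ℝ) ^ (2*p) * W ^ (2*p) * ((d:ℝ) * K)) := by ring
  -- Jensen
  have hcard : ((Finset.univ : Finset (Fin n → Bool)).card : ℝ) = 2^n := by
    rw [Finset.card_univ]
    simp [Fintype.card_fun]
  have hjensen := pow_sum_div_card_le_sum_pow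
    (s := Finset.univ) (f := X) (fun σ _ => (hXpow σ).1) (2*p - 1)
  rw [show 2*p - 1 + 1 = 2*p by omega] at hjensen
  -- final comparison of (avg)^(2p) with RHS^(2p)
  set R : ℝ := 10 * (d : ℝ) * Real.sqrt (Real.log d) * Real.sqrt n * W with hRdef
  have hR0 : 0 ≤ R := by positivity
  have havg0 : 0 ≤ (1 / 2 ^ n : ℝ) * ∑ σ : Fin n → Bool, X σ := by
    have : 0 ≤ ∑ σ : Fin n → Bool, X σ := Finset.sum_nonneg fun σ _ => (hXpow σ).1
    positivity
  refine le_of_pow_le_pow_left₀ (n := 2*p) (by omega) hR0 ?_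
  have hRpow : R ^ (2*p) = 100^p * (Real.log d)^p * (n:ℝ)^p * ((d:ℝ)^(2*p) * W^(2*p)) := by
    rw [hRdef]
    have hsq : ∀ x : ℝ, 0 ≤ x → Real.sqrt x ^ (2*p) = x ^ p := by
      intro x hx
      rw [pow_mul, Real.sq_sqrt hx]
    rw [mul_pow, mul_pow, mul_pow, mul_pow, hsq _ hL0.le, hsq _ (Nat.cast_nonneg n)]
    rw [show ((10:ℝ)) ^ (2*p) = 100^p by rw [pow_mul]; norm_num]
    ring
  rw [hRpow]
  have h2n0 : (0:ℝ) < 2^n := by positivity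
  -- avg^(2p) ≤ (∑ X^(2p)) / 2^n
  have hav : ((1 / 2 ^ n : ℝ) * ∑ σ : Fin n → Bool, X σ) ^ (2*p)
      ≤ (∑ σ : Fin n → Bool, X σ ^ (2*p)) / 2^n := by
    have e1 : ((1 / 2 ^ n : ℝ) * ∑ σ : Fin n → Bool, X σ) ^ (2*p)
        = ((∑ σ : Fin n → Bool, X σ) ^ (2*p) / (2^n) ^ (2*p - 1)) / 2^n := by
      rw [mul_pow, div_pow, one_pow]
      rw [show (2*p : ℕ) = (2*p - 1) + 1 by omega]
      rw [pow_succ ((2:ℝ)^n)]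
      field_simp
      rw [Nat.add_sub_cancel]; ring
    rw [e1, hcard] at *
    exact (div_le_div_iff_of_pos_right h2n0).mpr hjensen
  have hnum : (d:ℝ) * K ≤ 100^p * (Real.log d)^p * (n:ℝ)^p := by
    rw [hKdef]
    exact kio_numeric n d p hd hp1 hLp hp2L
  calc ((1 / 2 ^ n : ℝ) * ∑ σ : Fin n → Bool, X σ) ^ (2*p)
      ≤ (∑ σ : Fin n → Bool, X σ ^ (2*p)) / 2^n := hav
    _ ≤ ((2:ℝ)^n * ((d:ℝ)^(2*p) * W^(2*p) * ((d:ℝ)*K))) / 2^n :=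
        (div_le_div_iff_of_pos_right h2n0).mpr hchain
    _ = (d:ℝ)^(2*p) * W^(2*p) * ((d:ℝ)*K) := by field_simp
    _ ≤ (d:ℝ)^(2*p) * W^(2*p) * (100^p * (Real.log d)^p * (n:ℝ)^p) :=
        mul_le_mul_of_nonneg_left hnum (by positivity)
    _ = 100^p * (Real.log d)^p * (n:ℝ)^p * ((d:ℝ)^(2*p) * W^(2*p)) := by ring
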